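/- arXiv:2003.03605 — 7 statements merged into one kernel-verified Lean document; each statement's English description precedes it below -/
import Mathlib

section
/- Let G be a graph, σ a vertex ordering of G, d ∈ ℕ, and for each vertex u let ℓ(u) be the σ-minimum element of WReach_{⌊d/2⌋}[G,σ,u]. Then any two vertices u, v with ℓ(u) = ℓ(v) are at distance at most d in G; hence the partition of V(G) into equivalence classes of the relation u ∼ v ⟺ ℓ(u) = ℓ(v) is a clustering of G^d (every block is a clique in G^d). -/
open SimpleGraph Set

variable {V : Type*}

/-- The `d`-th power of a graph: distinct vertices adjacent iff joined by a walk
of length at most `d`. -/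
def gpow (G : SimpleGraph V) (d : ℕ) : SimpleGraph V where
  Adj u v := u ≠ v ∧ ∃ p : G.Walk u v, p.length ≤ d
  symm := by
    constructor
    rintro u v ⟨h, p, hp⟩
    exact ⟨h.symm, p.reverse, by simpa using hp⟩
  loopless := by constructor; rintro u ⟨h, _⟩; exact h rfl

/-- `v` is weakly `r`-reachable from `u` with respect to the ordering `σ`:
there is a path (walk) of length at most `r` from `u` to `v` all of whose
vertices are `≥_σ v`. -/
def wreach (G : SimpleGraph V) (σ : V → ℕ) (r : ℕ) (u v : V) : Prop :=
  ∃ p : G.Walk u v, p.length ≤ r ∧ ∀ x ∈ p.support, σ v ≤ σ x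

/-- The weak `r`-coloring number of the ordering `σ`. -/
noncomputable def wcolOrd (G : SimpleGraph V) (σ : V → ℕ) (r : ℕ) : ℕ :=
  sSup { n | ∃ u, n = {v | wreach G σ r u v}.ncard }

/-- The weak `r`-coloring number of `G`: minimum over (injective) vertex orderings. -/
noncomputable def wcol (G : SimpleGraph V) (r : ℕ) : ℕ :=
  sInf { c | ∃ σ : V → ℕ, Function.Injective σ ∧ wcolOrd G σ r = c }

/-- The coloring number of the ordering `σ`: max over vertices of one plus
the number of earlier neighbors. -/
noncomputable def colOrd (G : SimpleGraph V) (σ : V → ℕ) : ℕ :=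
  sSup { n | ∃ u, n = 1 + {v | G.Adj u v ∧ σ v < σ u}.ncard }

/-- The coloring number of `G` (one plus degeneracy). -/
noncomputable def colNum (G : SimpleGraph V) : ℕ :=
  sInf { c | ∃ σ : V → ℕ, Function.Injective σ ∧ colOrd G σ = c }

/-- Maximum degree. -/
noncomputable def maxDeg (G : SimpleGraph V) : ℕ :=
  sSup { n | ∃ u, n = (G.neighborSet u).ncard }

/-- Clique number. -/
noncomputable def cliqueNum' (G : SimpleGraph V) : ℕ :=
  sSup { n | ∃ s : Finset V, G.IsNClique n s }

/-- A clustering of `H`: a partition of the vertex set into cliques. -/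
def IsClustering (H : SimpleGraph V) (𝒳 : Set (Set V)) : Prop :=
  Setoid.IsPartition 𝒳 ∧ ∀ A ∈ 𝒳, H.IsClique A

/-- The quotient graph `H/𝒳`: blocks are vertices, distinct blocks adjacent iff some
pair of their elements is adjacent in `H`. -/
def quotGraph (H : SimpleGraph V) (𝒳 : Set (Set V)) : SimpleGraph 𝒳 where
  Adj A B := A ≠ B ∧ ∃ a ∈ (A : Set V), ∃ b ∈ (B : Set V), H.Adj a b
  symm := by
    constructor
    rintro A B ⟨hne, a, ha, b, hb, hab⟩
    exact ⟨hne.symm, b, hb, a, ha, hab.symm⟩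
  loopless := by constructor; rintro A ⟨h, _⟩; exact h rfl

/-- `S` induces a disjoint union of complete graphs in `H`
(adjacency is transitive on `S`). -/
def IsClusterSet (H : SimpleGraph V) (S : Set V) : Prop :=
  ∀ a ∈ S, ∀ b ∈ S, ∀ c ∈ S, H.Adj a b → H.Adj b c → a ≠ c → H.Adj a c

/-- The subchromatic number: least `c` admitting a `c`-coloring in which every color
class induces a disjoint union of complete graphs. -/
noncomputable def subchrom (H : SimpleGraph V) : ℕ :=
  sInf { c | ∃ f : V → Fin c, ∀ i, IsClusterSet H (f ⁻¹' {i}) }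

/-- A semi-ladder of length `k`: `x i` non-adjacent to `y i`, while `x i` adjacent
to `y j` whenever `i < j`. -/
def IsSemiLadder (H : SimpleGraph V) {k : ℕ} (x y : Fin k → V) : Prop :=
  (∀ i, ¬ H.Adj (x i) (y i)) ∧ ∀ i j, i < j → H.Adj (x i) (y j)

/-- The semi-ladder index of `H` is at most `q`. -/
def semiLadderIndexLE (H : SimpleGraph V) (q : ℕ) : Prop :=
  ∀ (k : ℕ) (x y : Fin k → V), IsSemiLadder H x y → k ≤ q

/-- Closed neighborhood. -/
def closedNbhd (H : SimpleGraph V) (a : V) : Set V := insert a (H.neighborSet a)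

/-- Treedepth at most `k`, via a forest (ancestor) order: a strict partial order in
which ancestors of each vertex form a chain of size `< k`, and every edge joins a
comparable pair. -/
def treedepthLE (G : SimpleGraph V) (k : ℕ) : Prop :=
  ∃ A : V → V → Prop,
    (∀ u v w, A u v → A v w → A u w) ∧ (∀ v, ¬ A v v) ∧
    (∀ a b v, A a v → A b v → a = b ∨ A a b ∨ A b a) ∧
    (∀ u v, G.Adj u v → A u v ∨ A v u) ∧
    (∀ v, {a | A a v}.ncard < k)
/-- If ℓ(u) is the σ-minimum of WReach_{⌊d/2⌋}[G,σ,u], then vertices with equal ℓ are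
at distance ≤ d, so the fibers of ℓ form a clustering of G^d. -/
theorem stmt3 (G : SimpleGraph V) (σ : V → ℕ) (d : ℕ) (ℓ : V → V)
    (hmem : ∀ u, wreach G σ (d / 2) u (ℓ u))
    (hmin : ∀ u v, wreach G σ (d / 2) u v → σ (ℓ u) ≤ σ v) :
    (∀ u v, ℓ u = ℓ v → u ≠ v → (gpow G d).Adj u v) ∧
      ∀ x, (gpow G d).IsClique { u | ℓ u = ℓ x } := by
  have key : ∀ u v, ℓ u = ℓ v → u ≠ v → (gpow G d).Adj u v := by
    intro u v h hne
    obtain ⟨p, hp, -⟩ := hmem u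
    obtain ⟨q, hq, -⟩ := hmem v
    refine ⟨hne, p.append (q.reverse.copy h.symm rfl), ?_⟩
    simp only [SimpleGraph.Walk.length_append, SimpleGraph.Walk.length_copy,
      SimpleGraph.Walk.length_reverse]
    omega
  exact ⟨key, fun x u hu v hv hne => key u v (hu.trans hv.symm) hne⟩
end

section
/- Let G be a graph, σ a vertex ordering of G, and d ∈ ℕ. Then there exists a clustering 𝒳 of G^d such that for all r ∈ ℕ, wcol_r(G^d / 𝒳) ≤ wcol_{2dr}(G, σ). -/
open SimpleGraph Set

variable {V : Type*}

section Auxx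

variable (G : SimpleGraph V) (σ : V → ℕ)

lemma wreach_self (k : ℕ) (u : V) : wreach G σ k u u := by
  refine ⟨SimpleGraph.Walk.nil, Nat.zero_le _, ?_⟩
  intro x hx
  rw [SimpleGraph.Walk.support_nil, List.mem_singleton] at hx
  exact hx ▸ le_refl _

/-- Existence of a σ-minimal weakly `k`-reachable vertex. -/
lemma exists_ctr [Fintype V] (k : ℕ) (u : V) :
    ∃ x, wreach G σ k u x ∧ ∀ y, wreach G σ k u y → σ x ≤ σ y := by
  obtain ⟨x, hx, hmin⟩ := Set.exists_min_image {x | wreach G σ k u x} σ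
    (Set.toFinite _) ⟨u, wreach_self G σ k u⟩
  exact ⟨x, hx, hmin⟩

/-- The center function: `ctr u` is the σ-least vertex weakly `k`-reachable from `u`. -/
noncomputable def ctr [Fintype V] (k : ℕ) (u : V) : V := (exists_ctr G σ k u).choose

lemma ctr_wreach [Fintype V] (k : ℕ) (u : V) : wreach G σ k u (ctr G σ k u) :=
  (exists_ctr G σ k u).choose_spec.1

lemma ctr_min [Fintype V] (k : ℕ) (u : V) :
    ∀ y, wreach G σ k u y → σ (ctr G σ k u) ≤ σ y :=
  (exists_ctr G σ k u).choose_spec.2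

/-- Every vertex on a walk of length ≤ `d` between `a` and `a'` is σ-at-least the
minimum of `σ (f a)` and `σ (f a')` where `f` is the center function for `d/2`. -/
lemma mid_bound [Fintype V] {d t : ℕ} {a a' : V} (w : G.Walk a a') (hw : w.length ≤ d)
    (ha : t ≤ σ (ctr G σ (d/2) a)) (ha' : t ≤ σ (ctr G σ (d/2) a')) :
    ∀ z ∈ w.support, t ≤ σ z := by
  classical
  obtain ⟨m, hmmem, hmin⟩ := Finset.exists_min_image w.support.toFinset σ
    ⟨a, by simp⟩
  rw [List.mem_toFinset] at hmmem
  have hmin' : ∀ z ∈ w.support, σ m ≤ σ z := fun z hz => hmin z (List.mem_toFinset.2 hz)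
  suffices h : t ≤ σ m by
    intro z hz; exact le_trans h (hmin' z hz)
  have hsum : (w.takeUntil m hmmem).length + (w.dropUntil m hmmem).length = w.length := by
    have := congrArg SimpleGraph.Walk.length (w.take_spec hmmem)
    rwa [SimpleGraph.Walk.length_append] at this
  rcases (by omega : (w.takeUntil m hmmem).length ≤ d/2 ∨
      (w.dropUntil m hmmem).length ≤ d/2) with hle | hle
  · have : wreach G σ (d/2) a m := by
      refine ⟨w.takeUntil m hmmem, hle, ?_⟩
      intro x hx
      exact hmin' x (SimpleGraph.Walk.support_takeUntil_subset w hmmem hx)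
    exact le_trans ha (ctr_min G σ (d/2) a m this)
  · have : wreach G σ (d/2) a' m := by
      refine ⟨(w.dropUntil m hmmem).reverse, by simpa using hle, ?_⟩
      intro x hx
      rw [SimpleGraph.Walk.support_reverse, List.mem_reverse] at hx
      exact hmin' x (SimpleGraph.Walk.support_dropUntil_subset w hmmem hx)
    exact le_trans ha' (ctr_min G σ (d/2) a' m this)

/-- Expansion of a quotient walk to a walk in `G` between centers. -/
lemma expandWalk [Fintype V] {d t : ℕ} {𝒳 : Set (Set V)} (cc : ↥𝒳 → V)
    (hmem : ∀ (A : ↥𝒳) (v : V), v ∈ (A : Set V) → ctr G σ (d/2) v = cc A)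
    {A B : ↥𝒳} (p : (quotGraph (gpow G d) 𝒳).Walk A B)
    (hsup : ∀ X ∈ p.support, t ≤ σ (cc X)) :
    ∃ q : G.Walk (cc A) (cc B), q.length ≤ 2 * d * p.length ∧
      ∀ x ∈ q.support, t ≤ σ x := by
  revert hsup
  induction p with
  | nil =>
    intro hsup
    refine ⟨SimpleGraph.Walk.nil, by simp, ?_⟩
    intro x hx
    rw [SimpleGraph.Walk.support_nil, List.mem_singleton] at hx
    subst hx
    exact hsup _ (SimpleGraph.Walk.start_mem_support _)
  | @cons A A' B h q ih =>
    intro hsup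
    have hsupq : ∀ X ∈ q.support, t ≤ σ (cc X) := fun X hX =>
      hsup X (by rw [SimpleGraph.Walk.support_cons]; exact List.mem_cons_of_mem _ hX)
    obtain ⟨q', hq'len, hq'sup⟩ := ih hsupq
    obtain ⟨a, haA, a', haA', haa⟩ :=
      (h : A ≠ A' ∧ ∃ a ∈ (A : Set V), ∃ b ∈ (A' : Set V), (gpow G d).Adj a b).2
    obtain ⟨w, hwlen⟩ := (haa : a ≠ a' ∧ ∃ p : G.Walk a a', p.length ≤ d).2
    obtain ⟨w1, hw1len, hw1sup⟩ := ctr_wreach G σ (d/2) a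
    obtain ⟨w2, hw2len, hw2sup⟩ := ctr_wreach G σ (d/2) a'
    have hfa : ctr G σ (d/2) a = cc A := hmem A a haA
    have hfa' : ctr G σ (d/2) a' = cc A' := hmem A' a' haA'
    have htA : t ≤ σ (cc A) := hsup A (SimpleGraph.Walk.start_mem_support _)
    have htA' : t ≤ σ (cc A') := hsupq A' (SimpleGraph.Walk.start_mem_support _)
    -- walk from cc A to a, then a to a', then a' to cc A'
    set w1' : G.Walk (cc A) a := (w1.copy rfl hfa).reverse with hw1'
    set w2' : G.Walk a' (cc A') := w2.copy rfl hfa' with hw2'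
    refine ⟨(w1'.append (w.append w2')).append q', ?_, ?_⟩
    · have h1 : w1'.length ≤ d/2 := by
        rw [hw1', SimpleGraph.Walk.length_reverse, SimpleGraph.Walk.length_copy]
        exact hw1len
      have h2 : w2'.length ≤ d/2 := by
        rw [hw2', SimpleGraph.Walk.length_copy]
        exact hw2len
      have hstep : w1'.length + (w.length + w2'.length) ≤ 2 * d := by omega
      rw [SimpleGraph.Walk.length_append, SimpleGraph.Walk.length_append,
        SimpleGraph.Walk.length_append, SimpleGraph.Walk.length_cons, Nat.mul_succ]
      omega
    · intro x hx
      rw [SimpleGraph.Walk.mem_support_append_iff, SimpleGraph.Walk.mem_support_append_iff,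
        SimpleGraph.Walk.mem_support_append_iff] at hx
      rcases hx with (hx | hx | hx) | hx
      · have : x ∈ w1.support := by
          rw [hw1', SimpleGraph.Walk.support_reverse, List.mem_reverse,
            SimpleGraph.Walk.support_copy] at hx
          exact hx
        exact le_trans htA (hfa ▸ hw1sup x this)
      · exact mid_bound G σ w hwlen (hfa ▸ htA) (hfa' ▸ htA') x hx
      · have : x ∈ w2.support := by
          rw [hw2', SimpleGraph.Walk.support_copy] at hx
          exact hx
        exact le_trans htA' (hfa' ▸ hw2sup x this)
      · exact hq'sup x hx

end Auxx

/-- Main theorem: there is a clustering 𝒳 of G^d with wcol_r(G^d/𝒳) ≤ wcol_{2dr}(G,σ). -/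
theorem stmt4 [Fintype V] (G : SimpleGraph V) (σ : V → ℕ)
    (hσ : Function.Injective σ) (d : ℕ) :
    ∃ 𝒳 : Set (Set V), IsClustering (gpow G d) 𝒳 ∧
      ∀ r : ℕ, wcol (quotGraph (gpow G d) 𝒳) r ≤ wcolOrd G σ (2 * d * r) := by
  classical
  set f : V → V := ctr G σ (d/2) with hf
  set 𝒳 : Set (Set V) := (fun x => f ⁻¹' {x}) '' Set.range f with h𝒳
  have hself : ∀ u, u ∈ f ⁻¹' {f u} := fun u => rfl
  -- partition
  have hpart : Setoid.IsPartition 𝒳 := by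
    constructor
    · rintro ⟨x, ⟨u, rfl⟩, hx⟩
      have : u ∈ (∅ : Set V) := hx ▸ hself u
      exact this
    · intro a
      refine ⟨f ⁻¹' {f a}, ⟨⟨f a, ⟨a, rfl⟩, rfl⟩, hself a⟩, ?_⟩
      rintro B ⟨⟨x, -, rfl⟩, haB⟩
      have : f a = x := haB
      rw [this]
  -- cliques
  have hclique : ∀ A ∈ 𝒳, (gpow G d).IsClique A := by
    rintro A ⟨x, -, rfl⟩ u hu v hv huv
    obtain ⟨p, hp, -⟩ := ctr_wreach G σ (d/2) u
    obtain ⟨q, hq, -⟩ := ctr_wreach G σ (d/2) v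
    have hu' : f u = x := hu
    have hv' : f v = x := hv
    refine ⟨huv, (p.copy rfl (hf ▸ hu')).append (q.copy rfl (hf ▸ hv')).reverse, ?_⟩
    rw [SimpleGraph.Walk.length_append, SimpleGraph.Walk.length_reverse,
      SimpleGraph.Walk.length_copy, SimpleGraph.Walk.length_copy]
    omega
  refine ⟨𝒳, ⟨hpart, hclique⟩, ?_⟩
  -- the center of each block
  have hcc : ∀ A : ↥𝒳, ∃ x, (A : Set V) = f ⁻¹' {x} := by
    rintro ⟨A, x, -, rfl⟩
    exact ⟨x, rfl⟩
  set cc : ↥𝒳 → V := fun A => (hcc A).choose with hccdef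
  have hccspec : ∀ A : ↥𝒳, (A : Set V) = f ⁻¹' {cc A} := fun A => (hcc A).choose_spec
  have hmem : ∀ (A : ↥𝒳) (v : V), v ∈ (A : Set V) → f v = cc A := by
    intro A v hv
    rw [hccspec A] at hv
    exact hv
  have hccinj : Function.Injective cc := by
    intro A B hAB
    apply Subtype.ext
    rw [hccspec A, hccspec B, hAB]
  intro r
  set τ : ↥𝒳 → ℕ := σ ∘ cc with hτ
  have hτinj : Function.Injective τ := fun A B h => hccinj (hσ h)
  have key : ∀ A : ↥𝒳,
      cc '' {B | wreach (quotGraph (gpow G d) 𝒳) τ r A B} ⊆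
        {v | wreach G σ (2 * d * r) (cc A) v} := by
    rintro A v ⟨B, ⟨p, hplen, hpsup⟩, rfl⟩
    obtain ⟨q, hqlen, hqsup⟩ := expandWalk G σ cc hmem p hpsup
    refine ⟨q, ?_, hqsup⟩
    calc q.length ≤ 2 * d * p.length := hqlen
      _ ≤ 2 * d * r := Nat.mul_le_mul_left _ hplen
  have hcount : ∀ A : ↥𝒳,
      {B | wreach (quotGraph (gpow G d) 𝒳) τ r A B}.ncard ≤
        {v | wreach G σ (2 * d * r) (cc A) v}.ncard := by
    intro A
    rw [← Set.ncard_image_of_injective _ hccinj]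
    exact Set.ncard_le_ncard (key A) (Set.toFinite _)
  have hbdd : BddAbove { n | ∃ u, n = {v | wreach G σ (2 * d * r) u v}.ncard } := by
    refine ⟨Nat.card V, ?_⟩
    rintro n ⟨u, rfl⟩
    calc {v | wreach G σ (2 * d * r) u v}.ncard
        ≤ (Set.univ : Set V).ncard := Set.ncard_le_ncard (Set.subset_univ _) (Set.toFinite _)
      _ = Nat.card V := Set.ncard_univ V
  have hord : wcolOrd (quotGraph (gpow G d) 𝒳) τ r ≤ wcolOrd G σ (2 * d * r) := by
    apply csSup_le'
    rintro n ⟨A, rfl⟩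
    calc {B | wreach (quotGraph (gpow G d) 𝒳) τ r A B}.ncard
        ≤ {v | wreach G σ (2 * d * r) (cc A) v}.ncard := hcount A
      _ ≤ wcolOrd G σ (2 * d * r) := le_csSup hbdd ⟨cc A, rfl⟩
  calc wcol (quotGraph (gpow G d) 𝒳) r
      ≤ wcolOrd (quotGraph (gpow G d) 𝒳) τ r := Nat.sInf_le ⟨τ, hτinj, rfl⟩
    _ ≤ wcolOrd G σ (2 * d * r) := hord
end

section
/- For every graph G and d ∈ ℕ, the subchromatic number of G^d is at most wcol_{2d}(G): χ_sub(G^d) ≤ wcol_{2d}(G). -/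
open SimpleGraph Set

variable {V : Type*}

section Stmt5Aux

open SimpleGraph

/-- The ball of radius `h` around `x`, via walks. -/
def ballSet (G : SimpleGraph V) (h : ℕ) (x : V) : Set V :=
  {u | ∃ w : G.Walk x u, w.length ≤ h}

lemma self_mem_ballSet (G : SimpleGraph V) (h : ℕ) (x : V) : x ∈ ballSet G h x :=
  ⟨Walk.nil, by simp⟩

variable [Fintype V]

/-- The anchor of `x`: a `σ`-minimal element of the ball of radius `d/2` around `x`. -/
noncomputable def anch (G : SimpleGraph V) (σ : V → ℕ) (d : ℕ) (x : V) : V :=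
  (Set.exists_min_image (ballSet G (d/2) x) σ (Set.toFinite _)
    ⟨x, self_mem_ballSet G (d/2) x⟩).choose

lemma anch_spec (G : SimpleGraph V) (σ : V → ℕ) (d : ℕ) (x : V) :
    anch G σ d x ∈ ballSet G (d/2) x ∧
      ∀ u ∈ ballSet G (d/2) x, σ (anch G σ d x) ≤ σ u := by
  have h := (Set.exists_min_image (ballSet G (d/2) x) σ (Set.toFinite _)
    ⟨x, self_mem_ballSet G (d/2) x⟩).choose_spec
  exact h

/-- Key lemma: if there is a walk of length at most `d` from `x` to `y`, and the anchor
of `y` is `σ`-at most the anchor of `x`, then the anchor of `y` is weakly `2d`-reachable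
from the anchor of `x`. -/
lemma key_wreach (G : SimpleGraph V) (σ : V → ℕ) (d : ℕ) {x y : V} (w : G.Walk x y)
    (hw : w.length ≤ d) (hle : σ (anch G σ d y) ≤ σ (anch G σ d x)) :
    wreach G σ (2*d) (anch G σ d x) (anch G σ d y) := by
  classical
  obtain ⟨⟨wa, hwa⟩, hminx⟩ := anch_spec G σ d x
  obtain ⟨⟨wy, hwy⟩, hminy⟩ := anch_spec G σ d y
  refine ⟨(wa.reverse.append w).append wy, ?_, ?_⟩
  · rw [Walk.length_append, Walk.length_append, Walk.length_reverse]
    omega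
  · intro z hz
    rw [Walk.mem_support_append_iff] at hz
    rcases hz with hz | hz
    · rw [Walk.mem_support_append_iff] at hz
      rcases hz with hz | hz
      · rw [Walk.support_reverse, List.mem_reverse] at hz
        have hzball : z ∈ ballSet G (d/2) x :=
          ⟨wa.takeUntil z hz, le_trans (Walk.length_takeUntil_le wa hz) hwa⟩
        exact le_trans hle (hminx z hzball)
      · have hsplit : (w.takeUntil z hz).length + (w.dropUntil z hz).length = w.length := by
          rw [← Walk.length_append, Walk.take_spec]
        by_cases hcase : (w.takeUntil z hz).length ≤ d/2
        · have hzball : z ∈ ballSet G (d/2) x := ⟨w.takeUntil z hz, hcase⟩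
          exact le_trans hle (hminx z hzball)
        · have h2 : (w.dropUntil z hz).length ≤ d/2 := by omega
          have hzball : z ∈ ballSet G (d/2) y :=
            ⟨(w.dropUntil z hz).reverse, by rw [Walk.length_reverse]; exact h2⟩
          exact hminy z hzball
    · have hzball : z ∈ ballSet G (d/2) y :=
        ⟨wy.takeUntil z hz, le_trans (Walk.length_takeUntil_le wy hz) hwy⟩
      exact hminy z hzball

/-- Conflict relation between anchors. -/
def QAdj (G : SimpleGraph V) (σ : V → ℕ) (d : ℕ) (m m' : V) : Prop :=
  ∃ x y : V, ∃ w : G.Walk x y, w.length ≤ d ∧ anch G σ d x = m ∧ anch G σ d y = m'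

/-- Greedy coloring of anchors along `σ`. -/
noncomputable def gamAux (G : SimpleGraph V) (σ : V → ℕ) (d : ℕ) : ℕ → V → ℕ
  | n, m =>
    sInf {c : ℕ | ∀ m' : V, σ m' < n → QAdj G σ d m m' → gamAux G σ d (σ m') m' ≠ c}
  termination_by n _ => n
  decreasing_by assumption

noncomputable def gam (G : SimpleGraph V) (σ : V → ℕ) (d : ℕ) (m : V) : ℕ :=
  gamAux G σ d (σ m) m

omit [Fintype V] in
lemma wreach_refl (G : SimpleGraph V) (σ : V → ℕ) (r : ℕ) (m : V) : wreach G σ r m m :=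
  ⟨Walk.nil, by simp, by simp⟩

lemma gam_main (G : SimpleGraph V) (σ : V → ℕ) (d K : ℕ)
    (hK : ∀ u : V, {v | wreach G σ (2*d) u v}.ncard ≤ K) (m : V) :
    gam G σ d m < K ∧
      ∀ m' : V, σ m' < σ m → QAdj G σ d m m' → gam G σ d m' ≠ gam G σ d m := by
  classical
  set S : Set ℕ :=
    {c : ℕ | ∀ m' : V, σ m' < σ m → QAdj G σ d m m' → gamAux G σ d (σ m') m' ≠ c} with hS
  have hunfold : gam G σ d m = sInf S := by
    rw [hS, gam, gamAux]
  set W : Finset V := Finset.univ.filter (fun v => wreach G σ (2*d) m v) with hW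
  have hWcard : W.card ≤ K := by
    have h1 : (W : Set V) = {v | wreach G σ (2*d) m v} := by ext v; simp [hW]
    have h2 := hK m
    rw [← h1, Set.ncard_coe_finset] at h2
    exact h2
  have hmW : m ∈ W := by
    rw [hW, Finset.mem_filter]
    exact ⟨Finset.mem_univ _, wreach_refl G σ _ m⟩
  set L : Finset V := Finset.univ.filter (fun m' => σ m' < σ m ∧ QAdj G σ d m m') with hL
  have hLsub : L ⊆ W.erase m := by
    intro m' hm'
    rw [hL, Finset.mem_filter] at hm'
    obtain ⟨-, hlt, x, y, w, hw, hx, hy⟩ := hm'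
    rw [Finset.mem_erase, hW, Finset.mem_filter]
    refine ⟨fun heq => by rw [heq] at hlt; omega, Finset.mem_univ _, ?_⟩
    have hle : σ (anch G σ d y) ≤ σ (anch G σ d x) := by rw [hx, hy]; omega
    have := key_wreach G σ d w hw hle
    rwa [hx, hy] at this
  have hK1 : 1 ≤ K := le_trans (Finset.card_pos.mpr ⟨m, hmW⟩) hWcard
  have hLcard : L.card ≤ K - 1 := by
    have := Finset.card_le_card hLsub
    rw [Finset.card_erase_of_mem hmW] at this
    omega
  set Bad : Finset ℕ := L.image (fun m' => gamAux G σ d (σ m') m') with hBad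
  have hBadcard : Bad.card ≤ K - 1 := le_trans Finset.card_image_le hLcard
  obtain ⟨c, hcK, hcBad⟩ : ∃ c, c < K ∧ c ∉ Bad := by
    by_contra hcon
    push_neg at hcon
    have hsub : Finset.range K ⊆ Bad := fun c hc => hcon c (Finset.mem_range.mp hc)
    have := Finset.card_le_card hsub
    rw [Finset.card_range] at this
    omega
  have hcS : c ∈ S := by
    intro m' h1 h2 heq
    exact hcBad (Finset.mem_image.mpr ⟨m', by
      rw [hL, Finset.mem_filter]; exact ⟨Finset.mem_univ _, h1, h2⟩, heq⟩)
  have hne : S.Nonempty := ⟨c, hcS⟩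
  have hmem : gam G σ d m ∈ S := by rw [hunfold]; exact Nat.sInf_mem hne
  have hlec : gam G σ d m ≤ c := by rw [hunfold]; exact Nat.sInf_le hcS
  exact ⟨lt_of_le_of_lt hlec hcK, fun m' h1 h2 => hmem m' h1 h2⟩

end Stmt5Aux

/-- χ_sub(G^d) ≤ wcol_{2d}(G). -/
theorem stmt5 [Fintype V] (G : SimpleGraph V) (d : ℕ) :
    subchrom (gpow G d) ≤ wcol G (2 * d) := by
  classical
  have hT : {c | ∃ σ : V → ℕ, Function.Injective σ ∧ wcolOrd G σ (2*d) = c}.Nonempty := by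
    obtain ⟨σ0, h0⟩ := exists_injective_nat V
    exact ⟨wcolOrd G σ0 (2*d), σ0, h0, rfl⟩
  obtain ⟨σ, hσinj, hσ⟩ := Nat.sInf_mem hT
  set K := wcol G (2*d) with hKdef
  have hσK : wcolOrd G σ (2*d) = K := hσ
  have hK : ∀ u : V, {v | wreach G σ (2*d) u v}.ncard ≤ K := by
    intro u
    have hBdd : BddAbove {n | ∃ u : V, n = {v | wreach G σ (2*d) u v}.ncard} := by
      refine ⟨Fintype.card V, ?_⟩
      rintro n ⟨u, rfl⟩
      have h1 : {v | wreach G σ (2*d) u v}.ncard ≤ (Set.univ : Set V).ncard :=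
        Set.ncard_le_ncard (Set.subset_univ _) Set.finite_univ
      simpa [Set.ncard_univ, Nat.card_eq_fintype_card] using h1
    have hmem : {v | wreach G σ (2*d) u v}.ncard ∈
        {n | ∃ u : V, n = {v | wreach G σ (2*d) u v}.ncard} := ⟨u, rfl⟩
    have h2 := le_csSup hBdd hmem
    rw [← hσK]
    exact h2
  rw [show (2 * d) = 2*d from rfl] at *
  have hgoal : K ∈ {c | ∃ f : V → Fin c, ∀ i, IsClusterSet (gpow G d) (f ⁻¹' {i})} := by
    refine ⟨fun v => ⟨gam G σ d (anch G σ d v), (gam_main G σ d K hK (anch G σ d v)).1⟩, ?_⟩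
    intro i a ha b hb c hc hab hbc hac
    simp only [Set.mem_preimage, Set.mem_singleton_iff] at ha hb hc
    obtain ⟨hne_ab, wab, hwab⟩ := hab
    obtain ⟨hne_bc, wbc, hwbc⟩ := hbc
    have hgab : gam G σ d (anch G σ d a) = gam G σ d (anch G σ d b) :=
      congrArg Fin.val (ha.trans hb.symm)
    have hgbc : gam G σ d (anch G σ d b) = gam G σ d (anch G σ d c) :=
      congrArg Fin.val (hb.trans hc.symm)
    have key_ne : ∀ (x y : V) (w : G.Walk x y), w.length ≤ d →
        gam G σ d (anch G σ d x) = gam G σ d (anch G σ d y) →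
        anch G σ d x = anch G σ d y := by
      intro x y w hw hg
      by_contra hne
      have hσne : σ (anch G σ d x) ≠ σ (anch G σ d y) := fun h => hne (hσinj h)
      rcases Nat.lt_or_ge (σ (anch G σ d x)) (σ (anch G σ d y)) with hlt | hge
      · exact (gam_main G σ d K hK (anch G σ d y)).2 (anch G σ d x) hlt
          ⟨y, x, w.reverse, by rwa [Walk.length_reverse], rfl, rfl⟩ hg
      · have hlt : σ (anch G σ d y) < σ (anch G σ d x) := lt_of_le_of_ne hge hσne.symm
        exact (gam_main G σ d K hK (anch G σ d x)).2 (anch G σ d y) hlt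
          ⟨x, y, w, hw, rfl, rfl⟩ hg.symm
    have hab' : anch G σ d a = anch G σ d b := key_ne a b wab hwab hgab
    have hbc' : anch G σ d b = anch G σ d c := key_ne b c wbc hwbc hgbc
    obtain ⟨⟨wa, hwa⟩, -⟩ := anch_spec G σ d a
    obtain ⟨⟨wc, hwc⟩, -⟩ := anch_spec G σ d c
    refine ⟨hac, wa.append ((wc.reverse).copy (by rw [hab', hbc']) rfl), ?_⟩
    rw [Walk.length_append, Walk.length_copy, Walk.length_reverse]
    omega
  exact Nat.sInf_le hgoal
end

section
/- For every graph G and odd integer d = 2k+1 with k ≥ 1, χ(G^d) ≤ ω(G^d)^3. -/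
open SimpleGraph Set

variable {V : Type*}

/-! ### Auxiliary material for `stmt11` -/

open Finset in
/-- Greedy coloring: if every degree is `< n` then the graph is `n`-colorable. -/
theorem aux_colorable_of_degLT [Fintype V] (H : SimpleGraph V) [DecidableRel H.Adj] (n : ℕ)
    (h : ∀ v, H.degree v < n) : H.Colorable n := by
  classical
  suffices h' : ∃ f : V → ℕ, (∀ v, f v < n) ∧
      ∀ u ∈ (Finset.univ : Finset V), ∀ v ∈ (Finset.univ : Finset V),
        H.Adj u v → f u ≠ f v by
    obtain ⟨f, hf1, hf2⟩ := h'
    exact ⟨SimpleGraph.Coloring.mk (fun v => (⟨f v, hf1 v⟩ : Fin n))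
      (fun {u v} hadj he => hf2 u (mem_univ _) v (mem_univ _) hadj (by
        simpa using congrArg Fin.val he))⟩
  suffices h' : ∀ s : Finset V, ∃ f : V → ℕ, (∀ v, f v < n) ∧
      ∀ u ∈ s, ∀ v ∈ s, H.Adj u v → f u ≠ f v from h' Finset.univ
  intro s
  induction s using Finset.induction_on with
  | empty =>
    cases isEmpty_or_nonempty V with
    | inl hV => exact ⟨fun _ => 0, fun v => (IsEmpty.false v).elim, by simp⟩
    | inr hV =>
      obtain ⟨v⟩ := hV
      exact ⟨fun _ => 0, fun _ => lt_of_le_of_lt (Nat.zero_le _) (h v), by simp⟩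
  | @insert a s ha ih =>
    obtain ⟨f, hf1, hf2⟩ := ih
    have hcard : ((H.neighborFinset a).image f).card < n :=
      lt_of_le_of_lt Finset.card_image_le (by rw [card_neighborFinset_eq_degree]; exact h a)
    have hne : (Finset.range n \ (H.neighborFinset a).image f).Nonempty := by
      rw [← Finset.card_pos]
      have := Finset.le_card_sdiff ((H.neighborFinset a).image f) (Finset.range n)
      rw [Finset.card_range] at this
      omega
    obtain ⟨c, hc⟩ := hne
    rw [Finset.mem_sdiff, Finset.mem_range] at hc
    have hcnot : ∀ w, H.Adj a w → f w ≠ c := by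
      intro w hw hfw
      exact hc.2 (Finset.mem_image.mpr ⟨w, by simpa [mem_neighborFinset] using hw, hfw⟩)
    refine ⟨Function.update f a c, ?_, ?_⟩
    · intro v
      rcases eq_or_ne v a with rfl | hva
      · simpa using hc.1
      · simpa [Function.update_of_ne hva] using hf1 v
    · intro u hu v hv hadj
      rcases eq_or_ne u a with rfl | hua
      · have hva : v ≠ u := hadj.ne.symm
        rw [Function.update_self, Function.update_of_ne hva]
        exact fun he => hcnot v hadj he.symm
      · rw [Function.update_of_ne hua]
        rcases eq_or_ne v a with rfl | hvb
        · rw [Function.update_self]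
          exact hcnot u hadj.symm
        · rw [Function.update_of_ne hvb]
          exact hf2 u ((Finset.mem_insert.mp hu).resolve_left hua)
            v ((Finset.mem_insert.mp hv).resolve_left hvb) hadj

/-- Splitting a walk of length `≤ r + s` at an intermediate vertex. -/
theorem aux_walk_split {G : SimpleGraph V} {u x : V} (p : G.Walk u x) :
    ∀ r s : ℕ, p.length ≤ r + s →
      ∃ w, (∃ q : G.Walk u w, q.length ≤ r) ∧ ∃ q' : G.Walk w x, q'.length ≤ s := by
  induction p with
  | nil => exact fun r s _ => ⟨_, ⟨SimpleGraph.Walk.nil, Nat.zero_le _⟩,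
      SimpleGraph.Walk.nil, Nat.zero_le _⟩
  | @cons a b c h p ih =>
    intro r s hl
    cases r with
    | zero => exact ⟨a, ⟨SimpleGraph.Walk.nil, le_rfl⟩, SimpleGraph.Walk.cons h p,
        by simpa using hl⟩
    | succ r =>
      have hpl : p.length ≤ r + s := by
        rw [SimpleGraph.Walk.length_cons] at hl; omega
      obtain ⟨w, ⟨q, hq⟩, hq'⟩ := ih r s hpl
      exact ⟨w, ⟨SimpleGraph.Walk.cons h q,
        by rw [SimpleGraph.Walk.length_cons]; omega⟩, hq'⟩

/-- The ball of radius `r` around `u` (as a finset). -/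
noncomputable def gball [Fintype V] (G : SimpleGraph V) (r : ℕ) (u : V) : Finset V :=
  letI := Classical.decPred fun v => ∃ p : G.Walk u v, p.length ≤ r
  Finset.univ.filter fun v => ∃ p : G.Walk u v, p.length ≤ r

theorem mem_gball [Fintype V] {G : SimpleGraph V} {r : ℕ} {u v : V} :
    v ∈ gball G r u ↔ ∃ p : G.Walk u v, p.length ≤ r := by
  classical
  simp [gball]

theorem self_mem_gball [Fintype V] {G : SimpleGraph V} {r : ℕ} {u : V} :
    u ∈ gball G r u :=
  mem_gball.mpr ⟨SimpleGraph.Walk.nil, Nat.zero_le _⟩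

theorem gball_mono [Fintype V] {G : SimpleGraph V} {r r' : ℕ} (h : r ≤ r') (u : V) :
    gball G r u ⊆ gball G r' u := by
  intro x hx
  obtain ⟨p, hp⟩ := mem_gball.mp hx
  exact mem_gball.mpr ⟨p, hp.trans h⟩

theorem card_gball_add_le [Fintype V] (G : SimpleGraph V) (r s : ℕ) (u : V) (m : ℕ)
    (hm : ∀ w, (gball G s w).card ≤ m) :
    (gball G (r + s) u).card ≤ (gball G r u).card * m := by
  classical
  have hsub : gball G (r + s) u ⊆ (gball G r u).biUnion fun w => gball G s w := by
    intro x hx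
    obtain ⟨p, hp⟩ := mem_gball.mp hx
    obtain ⟨w, ⟨q, hq⟩, q', hq'⟩ := aux_walk_split p r s hp
    exact Finset.mem_biUnion.mpr ⟨w, mem_gball.mpr ⟨q, hq⟩, mem_gball.mpr ⟨q', hq'⟩⟩
  calc (gball G (r + s) u).card ≤ _ := Finset.card_le_card hsub
    _ ≤ ∑ w ∈ gball G r u, (gball G s w).card := Finset.card_biUnion_le
    _ ≤ (gball G r u).card * m := by
        simpa using Finset.sum_le_card_nsmul (gball G r u) _ m fun w _ => hm w

/-- Any clique's size is at most the clique number. -/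
theorem aux_card_le_cliqueNum [Fintype V] {H : SimpleGraph V} {s : Finset V}
    (hs : H.IsClique (s : Set V)) : s.card ≤ cliqueNum' H := by
  apply le_csSup
  · refine ⟨Fintype.card V, ?_⟩
    rintro n ⟨t, ht⟩
    exact ht.card_eq ▸ Finset.card_le_univ t
  · exact ⟨s, hs, rfl⟩

/-- A radius-`k` ball is a clique in `G^(2k+1)`. -/
theorem gball_isClique [Fintype V] (G : SimpleGraph V) (k : ℕ) (w : V) :
    (gpow G (2 * k + 1)).IsClique ((gball G k w : Finset V) : Set V) := by
  intro x hx y hy hxy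
  obtain ⟨q, hq⟩ := mem_gball.mp (by simpa using hx)
  obtain ⟨q', hq'⟩ := mem_gball.mp (by simpa using hy)
  refine ⟨hxy, q.reverse.append q', ?_⟩
  rw [SimpleGraph.Walk.length_append, SimpleGraph.Walk.length_reverse]
  omega

/-- For odd d = 2k+1 with k ≥ 1, χ(G^d) ≤ ω(G^d)³. -/
theorem stmt11 [Fintype V] (G : SimpleGraph V) (k : ℕ) (hk : 1 ≤ k) :
    (gpow G (2 * k + 1)).chromaticNumber ≤
      ((cliqueNum' (gpow G (2 * k + 1))) ^ 3 : ℕ) := by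
  classical
  set ω := cliqueNum' (gpow G (2 * k + 1)) with hω
  -- each radius-k ball has size at most ω
  have hball : ∀ w, (gball G k w).card ≤ ω := fun w =>
    aux_card_le_cliqueNum (gball_isClique G k w)
  -- radius-(k+k) balls have size ≤ ω * ω
  have hball2 : ∀ w, (gball G (k + k) w).card ≤ ω * ω := fun w =>
    (card_gball_add_le G k k w ω hball).trans
      (Nat.mul_le_mul_right ω (hball w))
  -- radius-(2k+1) balls have size ≤ ω ^ 3
  have hball3 : ∀ u, (gball G (2 * k + 1) u).card ≤ ω ^ 3 := by
    intro u
    have h1 : gball G (2 * k + 1) u ⊆ gball G (k + (k + k)) u :=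
      gball_mono (by omega) u
    calc (gball G (2 * k + 1) u).card
        ≤ (gball G (k + (k + k)) u).card := Finset.card_le_card h1
      _ ≤ (gball G k u).card * (ω * ω) := card_gball_add_le G k (k + k) u (ω * ω) hball2
      _ ≤ ω * (ω * ω) := Nat.mul_le_mul_right _ (hball u)
      _ = ω ^ 3 := by ring
  -- degrees in gpow are < ω ^ 3
  letI : DecidableRel (gpow G (2 * k + 1)).Adj := Classical.decRel _
  have hdeg : ∀ v, (gpow G (2 * k + 1)).degree v < ω ^ 3 := by
    intro v
    have hsub : (gpow G (2 * k + 1)).neighborFinset v ⊆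
        (gball G (2 * k + 1) v).erase v := by
      intro w hw
      rw [SimpleGraph.mem_neighborFinset] at hw
      obtain ⟨hne, p, hp⟩ := hw
      exact Finset.mem_erase.mpr ⟨hne.symm, mem_gball.mpr ⟨p, hp⟩⟩
    have h1 : (gpow G (2 * k + 1)).degree v ≤
        ((gball G (2 * k + 1) v).erase v).card := by
      rw [← SimpleGraph.card_neighborFinset_eq_degree]
      exact Finset.card_le_card hsub
    have h2 : ((gball G (2 * k + 1) v).erase v).card <
        (gball G (2 * k + 1) v).card :=
      Finset.card_erase_lt_of_mem self_mem_gball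
    exact lt_of_le_of_lt h1 (lt_of_lt_of_le h2 (hball3 v))
  exact (aux_colorable_of_degLT _ (ω ^ 3) hdeg).chromaticNumber_le
end

section
/- If a graph G has maximum degree at most r and girth greater than 3d, then for even d, ω(G^d) ≤ 1 + r·((r-1)^{d/2} - 1)/(r-2) for r ≥ 3 (more loosely, ω(G^d) = O(r^{d/2})); equivalently: every clique in G^d is contained in a ball of radius d/2 around some vertex. -/
open SimpleGraph Set

variable {V : Type*}

section AuxStmt12

variable {G : SimpleGraph V}

private lemma aux_cycle_length_gt {n : ℕ} (hg : (n : ℕ∞) < G.girth) {a : V} {C : G.Walk a a}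
    (hC : C.IsCycle) : n < C.length := by
  have h1 : G.egirth ≤ (C.length : ℕ∞) := iInf_le_of_le a (iInf_le_of_le C (iInf_le _ hC))
  have h2 : (G.girth : ℕ∞) ≤ G.egirth := ENat.coe_toNat_le_self _
  exact_mod_cast (hg.trans_le h2).trans_le h1

private lemma aux_support_subset {u v w : V} (P : G.Walk u w) (Q : G.Walk u v) (R : G.Walk v w)
    (hP : P.IsPath)
    (hbig : ∀ (a : V) (C : G.Walk a a), C.IsCycle → P.length + Q.length + R.length < C.length) :
    ∀ x ∈ P.support, x ∈ Q.support ∨ x ∈ R.support := by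
  classical
  set L : List (Sym2 V) := P.edges ++ Q.edges ++ R.edges with hL
  set s : Set (Sym2 V) := {e | e ∈ L} with hs
  have hsG : s ⊆ G.edgeSet := by
    intro e he
    simp only [hs, hL, Set.mem_setOf_eq, List.mem_append] at he
    rcases he with (he | he) | he
    exacts [P.edges_subset_edgeSet he, Q.edges_subset_edgeSet he, R.edges_subset_edgeSet he]
  set H := SimpleGraph.fromEdgeSet s with hH
  have hmem : ∀ e ∈ L, e ∈ H.edgeSet := by
    intro e he
    rw [hH, edgeSet_fromEdgeSet]
    exact ⟨he, G.not_isDiag_of_mem_edgeSet (hsG he)⟩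
  have hPe : ∀ e ∈ P.edges, e ∈ H.edgeSet := fun e he => hmem e (by simp [hL, he])
  have hQe : ∀ e ∈ Q.edges, e ∈ H.edgeSet := fun e he => hmem e (by simp [hL, he])
  have hRe : ∀ e ∈ R.edges, e ∈ H.edgeSet := fun e he => hmem e (by simp [hL, he])
  have hac : H.IsAcyclic := by
    intro a C hC
    have hCe : ∀ e ∈ C.edges, e ∈ G.edgeSet := by
      intro e he
      have h1 := C.edges_subset_edgeSet he
      rw [hH, edgeSet_fromEdgeSet] at h1
      exact hsG h1.1
    have hcyc := hC.transfer hCe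
    have hlt := hbig a (C.transfer G hCe) hcyc
    rw [Walk.length_transfer] at hlt
    have hsub : C.edges.toFinset ⊆ L.toFinset := by
      intro e he
      rw [List.mem_toFinset] at he ⊢
      have h1 := C.edges_subset_edgeSet he
      rw [hH, edgeSet_fromEdgeSet] at h1
      exact h1.1
    have hlen : C.length ≤ L.length := by
      calc C.length = C.edges.length := (C.length_edges).symm
        _ = C.edges.toFinset.card := (List.toFinset_card_of_nodup hC.edges_nodup).symm
        _ ≤ L.toFinset.card := Finset.card_le_card hsub
        _ ≤ L.length := List.toFinset_card_le L
    have hLlen : L.length = P.length + Q.length + R.length := by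
      simp only [hL, List.length_append, Walk.length_edges]
    omega
  have hkey : (P.transfer H hPe) = ((Q.transfer H hQe).append (R.transfer H hRe)).bypass := by
    have h1 := hac.path_unique ⟨P.transfer H hPe, hP.transfer hPe⟩
      ⟨((Q.transfer H hQe).append (R.transfer H hRe)).bypass, Walk.bypass_isPath _⟩
    exact congrArg Subtype.val h1
  intro x hx
  have hx1 : x ∈ (P.transfer H hPe).support := by rwa [Walk.support_transfer]
  rw [hkey] at hx1
  have hx2 := Walk.support_bypass_subset _ hx1
  rwa [Walk.mem_support_append_iff, Walk.support_transfer, Walk.support_transfer] at hx2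

private lemma aux_split {u w : V} (p : G.Walk u w) :
    ∀ i : ℕ, i ≤ p.length → ∃ x : V, x ∈ p.support ∧ ∃ (q : G.Walk u x) (r : G.Walk x w),
      q.length = i ∧ q.length + r.length = p.length := by
  induction p with
  | nil =>
    intro i hi
    exact ⟨_, by simp, Walk.nil, Walk.nil, by simp at hi ⊢; omega, by simp⟩
  | @cons a b c h p ih =>
    intro i hi
    cases i with
    | zero => exact ⟨a, by simp, Walk.nil, Walk.cons h p, rfl, by simp⟩
    | succ i =>
      obtain ⟨x, hx, q, r, h1, h2⟩ := ih i (by simpa using hi)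
      exact ⟨x, by simp [hx], Walk.cons h q, r, by simp [h1],
        by simp only [Walk.length_cons]; omega⟩

private lemma aux_center {d : ℕ} [Fintype V] (hg : (3 * d : ℕ∞) < G.girth) (S : Set V)
    (hS : S.Nonempty) (hpair : ∀ a ∈ S, ∀ b ∈ S, G.Reachable a b ∧ G.dist a b ≤ d)
    (hdeven : d % 2 = 0) :
    ∃ c : V, ∀ v ∈ S, G.Reachable v c ∧ G.dist v c ≤ d / 2 := by
  classical
  have h3d : ∀ (a : V) (C : G.Walk a a), C.IsCycle → 3 * d < C.length := by
    intro a C hC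
    exact aux_cycle_length_gt (by exact_mod_cast hg) hC
  obtain ⟨x0, hx0⟩ := hS
  obtain ⟨⟨u, w⟩, hmem, hmax⟩ := Finset.exists_max_image (S.toFinset ×ˢ S.toFinset)
    (fun p => G.dist p.1 p.2) ⟨(x0, x0), by simp [Finset.mem_product, Set.mem_toFinset, hx0]⟩
  rw [Finset.mem_product, Set.mem_toFinset, Set.mem_toFinset] at hmem
  obtain ⟨hu, hw⟩ := hmem
  set t := G.dist u w with ht
  have htd : t ≤ d := (hpair u hu w hw).2
  obtain ⟨P, hPpath, hPlen⟩ := (hpair u hu w hw).1.exists_path_of_dist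
  obtain ⟨c, hcP, p1, p2, hp1, hp12⟩ := aux_split P (t / 2) (by omega)
  have hduc : G.dist u c ≤ t / 2 := hp1 ▸ dist_le p1
  have hdcw : G.dist c w ≤ t - t / 2 := by
    have h1 := dist_le p2
    omega
  have hlow : t ≤ G.dist u c + G.dist c w := by
    obtain ⟨a1, ha1⟩ := p1.reachable.exists_walk_length_eq_dist
    obtain ⟨a2, ha2⟩ := p2.reachable.exists_walk_length_eq_dist
    have h1 := dist_le (a1.append a2)
    rw [Walk.length_append, ha1, ha2] at h1
    omega
  refine ⟨c, fun v hv => ?_⟩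
  have ht' : G.dist u v ≤ t := hmax (u, v)
    (by rw [Finset.mem_product]; exact ⟨Set.mem_toFinset.mpr hu, Set.mem_toFinset.mpr hv⟩)
  have hs' : G.dist v w ≤ t := hmax (v, w)
    (by rw [Finset.mem_product]; exact ⟨Set.mem_toFinset.mpr hv, Set.mem_toFinset.mpr hw⟩)
  obtain ⟨Q, hQpath, hQlen⟩ := (hpair u hu v hv).1.exists_path_of_dist
  obtain ⟨R, hRpath, hRlen⟩ := (hpair v hv w hw).1.exists_path_of_dist
  have hbig : ∀ (a : V) (C : G.Walk a a), C.IsCycle →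
      P.length + Q.length + R.length < C.length := by
    intro a C hC
    have h1 := h3d a C hC
    omega
  rcases aux_support_subset P Q R hPpath hbig c hcP with hcQ | hcR
  · have hsp := Q.take_spec hcQ
    have hlen : (Q.takeUntil c hcQ).length + (Q.dropUntil c hcQ).length = Q.length := by
      rw [← Walk.length_append, hsp]
    have h1 : G.dist u c ≤ (Q.takeUntil c hcQ).length := dist_le _
    have h2 : G.dist c v ≤ (Q.dropUntil c hcQ).length := dist_le _
    refine ⟨(Q.dropUntil c hcQ).reverse.reachable, ?_⟩
    rw [G.dist_comm]
    omega
  · have hsp := R.take_spec hcR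
    have hlen : (R.takeUntil c hcR).length + (R.dropUntil c hcR).length = R.length := by
      rw [← Walk.length_append, hsp]
    have h1 : G.dist v c ≤ (R.takeUntil c hcR).length := dist_le _
    have h2 : G.dist c w ≤ (R.dropUntil c hcR).length := dist_le _
    exact ⟨(R.takeUntil c hcR).reachable, by omega⟩

private lemma aux_step {c x : V} {j : ℕ} (hr : G.Reachable x c) (hdist : G.dist x c = j + 1) :
    ∃ y, G.Adj x y ∧ G.Reachable y c ∧ G.dist y c = j := by
  obtain ⟨p, hp⟩ := hr.exists_walk_length_eq_dist
  cases p with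
  | nil => rw [Walk.length_nil] at hp; omega
  | @cons _ y _ h q =>
    rw [Walk.length_cons, hdist] at hp
    have h1 : G.dist y c ≤ j := by have := dist_le q; omega
    obtain ⟨q', hq'⟩ := q.reachable.exists_walk_length_eq_dist
    have h2 := dist_le (Walk.cons h q')
    rw [Walk.length_cons, hq'] at h2
    exact ⟨y, h, q.reachable, by omega⟩

open scoped Classical in
private lemma aux_ball [Fintype V] {r : ℕ} (hΔ : ∀ x : V, (G.neighborFinset x).card ≤ r)
    (c : V) (k : ℕ) :
    (Finset.univ.filter fun v => G.Reachable v c ∧ G.dist v c ≤ k).card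
      ≤ 1 + ∑ i ∈ Finset.range k, r * (r - 1) ^ i := by
  classical
  set T : ℕ → Finset V := fun j => Finset.univ.filter fun v => G.Reachable v c ∧ G.dist v c = j
    with hT
  have hT0 : (T 0).card ≤ 1 := by
    apply Finset.card_le_one.mpr
    intro a ha b hb
    simp only [hT, Finset.mem_filter] at ha hb
    rw [ha.2.1.dist_eq_zero_iff.mp ha.2.2, hb.2.1.dist_eq_zero_iff.mp hb.2.2]
  have hT1 : (T 1).card ≤ r := by
    refine le_trans (Finset.card_le_card ?_) (hΔ c)
    intro a ha
    simp only [hT, Finset.mem_filter] at ha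
    rw [mem_neighborFinset]
    exact (dist_eq_one_iff_adj.mp ha.2.2).symm
  have hstep : ∀ j, 1 ≤ j → (T (j + 1)).card ≤ (r - 1) * (T j).card := by
    intro j hj
    set f : V → V := fun v =>
      if h : ∃ y, G.Adj v y ∧ G.Reachable y c ∧ G.dist y c = j then h.choose else v with hf
    apply Finset.card_le_mul_card_image_of_maps_to (f := f)
    · intro a ha
      simp only [hT, Finset.mem_filter] at ha ⊢
      obtain ⟨y, hy⟩ := aux_step ha.2.1 ha.2.2
      have hex : ∃ y, G.Adj a y ∧ G.Reachable y c ∧ G.dist y c = j := ⟨y, hy⟩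
      have hspec := hex.choose_spec
      simp only [hf, dif_pos hex]
      exact ⟨Finset.mem_univ _, hspec.2.1, hspec.2.2⟩
    · intro x hx
      simp only [hT, Finset.mem_filter] at hx
      obtain ⟨j', hj'⟩ : ∃ j', j = j' + 1 := ⟨j - 1, by omega⟩
      obtain ⟨y, hy⟩ := aux_step hx.2.1 (hj' ▸ hx.2.2)
      refine le_trans (Finset.card_le_card (t := G.neighborFinset x \ {y}) ?_) ?_
      · intro a ha
        simp only [hT, Finset.mem_filter] at ha
        obtain ⟨⟨-, har, had⟩, hfa⟩ := ha
        have hex : ∃ z, G.Adj a z ∧ G.Reachable z c ∧ G.dist z c = j := by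
          obtain ⟨z, hz⟩ := aux_step har had
          exact ⟨z, hz⟩
        have hspec := hex.choose_spec
        have hfa' : hex.choose = x := by
          rw [hf] at hfa
          simpa [dif_pos hex] using hfa
        rw [Finset.mem_sdiff, mem_neighborFinset, Finset.mem_singleton]
        constructor
        · rw [← hfa']; exact hspec.1.symm
        · rintro rfl
          rw [hy.2.2] at had
          omega
      · have hysub : {y} ⊆ G.neighborFinset x := by simp [mem_neighborFinset, hy.1]
        rw [Finset.card_sdiff_of_subset hysub, Finset.card_singleton]
        exact Nat.sub_le_sub_right (hΔ x) 1
  have hpow : ∀ j, (T (j + 1)).card ≤ r * (r - 1) ^ j := by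
    intro j
    induction j with
    | zero => simpa using hT1
    | succ j ih =>
      calc (T (j + 1 + 1)).card ≤ (r - 1) * (T (j + 1)).card := hstep (j + 1) (by omega)
        _ ≤ (r - 1) * (r * (r - 1) ^ j) := Nat.mul_le_mul_left _ ih
        _ = r * (r - 1) ^ (j + 1) := by rw [pow_succ]; ring
  calc (Finset.univ.filter fun v => G.Reachable v c ∧ G.dist v c ≤ k).card
      ≤ ((Finset.range (k + 1)).biUnion T).card := by
        apply Finset.card_le_card
        intro v hv
        simp only [Finset.mem_filter] at hv
        rw [Finset.mem_biUnion]
        exact ⟨G.dist v c, by rw [Finset.mem_range]; omega, by simp [hT, hv.2.1]⟩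
    _ ≤ ∑ j ∈ Finset.range (k + 1), (T j).card := Finset.card_biUnion_le
    _ = (∑ j ∈ Finset.range k, (T (j + 1)).card) + (T 0).card := Finset.sum_range_succ' _ _
    _ ≤ (∑ j ∈ Finset.range k, r * (r - 1) ^ j) + 1 :=
        add_le_add (Finset.sum_le_sum fun j _ => hpow j) hT0
    _ = 1 + ∑ i ∈ Finset.range k, r * (r - 1) ^ i := by omega

open scoped Classical in
private lemma aux_deg [Fintype V] {r : ℕ} (h : maxDeg G ≤ r) :
    ∀ x : V, (G.neighborFinset x).card ≤ r := by
  intro x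
  have hb : BddAbove { n | ∃ u : V, n = (G.neighborSet u).ncard } := by
    refine ⟨Fintype.card V, ?_⟩
    rintro n ⟨u, rfl⟩
    calc (G.neighborSet u).ncard ≤ (Set.univ : Set V).ncard :=
          Set.ncard_le_ncard (Set.subset_univ _) Set.finite_univ
      _ = Fintype.card V := by rw [Set.ncard_univ, Nat.card_eq_fintype_card]
  have hm : (G.neighborSet x).ncard ≤ maxDeg G := le_csSup hb ⟨x, rfl⟩
  have he : (G.neighborSet x).ncard = (G.neighborFinset x).card := by
    rw [G.neighborFinset_def, Set.ncard_eq_toFinset_card']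
  omega

end AuxStmt12

/-- If Δ(G) ≤ r and girth(G) > 3d with d even, then every clique of G^d lies in a ball
of radius d/2, and ω(G^d) ≤ 1 + r + r(r-1) + ⋯ + r(r-1)^{d/2-1}. -/
theorem stmt12 [Fintype V] (G : SimpleGraph V) (d r : ℕ) (hd : Even d)
    (hg : (3 * d : ℕ∞) < G.girth) (hΔ : maxDeg G ≤ r) :
    (∀ S : Set V, S.Nonempty → (gpow G d).IsClique S →
        ∃ c : V, ∀ v ∈ S, G.dist v c ≤ d / 2) ∧
      cliqueNum' (gpow G d) ≤ 1 + ∑ i ∈ Finset.range (d / 2), r * (r - 1) ^ i := by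
  classical
  obtain ⟨k, hk⟩ := hd
  have hdeven : d % 2 = 0 := by omega
  have hcenter : ∀ S : Set V, S.Nonempty → (gpow G d).IsClique S →
      ∃ c : V, ∀ v ∈ S, G.Reachable v c ∧ G.dist v c ≤ d / 2 := by
    intro S hne hcl
    apply aux_center hg S hne _ hdeven
    intro a ha b hb
    by_cases hab : a = b
    · subst hab
      exact ⟨Reachable.refl a, by rw [SimpleGraph.dist_self]; omega⟩
    · obtain ⟨-, p, hp⟩ := hcl ha hb hab
      exact ⟨p.reachable, le_trans (dist_le p) hp⟩
  constructor
  · intro S hne hcl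
    obtain ⟨c, hc⟩ := hcenter S hne hcl
    exact ⟨c, fun v hv => (hc v hv).2⟩
  · have hne : {n | ∃ s : Finset V, (gpow G d).IsNClique n s}.Nonempty :=
      ⟨0, ∅, by simp⟩
    apply csSup_le hne
    rintro n ⟨s, hs⟩
    rcases s.eq_empty_or_nonempty with rfl | hsne
    · have h0 : n = 0 := by simpa using hs
      omega
    · obtain ⟨c, hc⟩ := hcenter ↑s (by exact_mod_cast hsne) hs.1
      have hsub : s ⊆ Finset.univ.filter fun v => G.Reachable v c ∧ G.dist v c ≤ d / 2 := by
        intro v hv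
        simp only [Finset.mem_filter]
        exact ⟨Finset.mem_univ _, hc v (by exact_mod_cast hv)⟩
      calc n = s.card := hs.2.symm
        _ ≤ _ := Finset.card_le_card hsub
        _ ≤ 1 + ∑ i ∈ Finset.range (d / 2), r * (r - 1) ^ i := aux_ball (aux_deg hΔ) c (d / 2)
end

section
/- For every graph H with semi-ladder index at most q and every inclusion-wise maximal clique K in H, there exists a subset A ⊆ K with |A| ≤ q such that K equals the intersection of the closed neighborhoods of the vertices of A: K = ⋂_{a∈A} N_H[a]. -/
open SimpleGraph Set

variable {V : Type*}

/-- If H has semi-ladder index ≤ q, every maximal clique K is the intersection of the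
closed neighborhoods of at most q of its vertices. -/
theorem stmt13 (H : SimpleGraph V) (q : ℕ) (hq : semiLadderIndexLE H q)
    (K : Set V) (hK : H.IsClique K)
    (hmax : ∀ K' : Set V, H.IsClique K' → K ⊆ K' → K = K') :
    ∃ A : Set V, A ⊆ K ∧ A.Finite ∧ A.ncard ≤ q ∧
      K = ⋂ a ∈ A, closedNbhd H a := by
  classical
  have hKsub : ∀ a ∈ K, K ⊆ closedNbhd H a := by
    intro a ha v hv
    rcases eq_or_ne v a with rfl | hne
    · exact Set.mem_insert _ _
    · exact Set.mem_insert_of_mem _ ((hK ha hv hne.symm))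
  suffices h : ∀ n : ℕ,
      (∃ x y : Fin n → V, (∀ i, x i ∈ K) ∧ (∀ i, y i ∉ K) ∧
        (∀ i, y i ∉ closedNbhd H (x i)) ∧ (∀ i j, i < j → y j ∈ closedNbhd H (x i))) ∨
      (∃ A : Set V, A ⊆ K ∧ A.Finite ∧ A.ncard ≤ q ∧ K = ⋂ a ∈ A, closedNbhd H a) by
    have key : ∀ (n : ℕ) (x y : Fin n → V), (∀ i, x i ∈ K) → (∀ i, y i ∉ K) →
        (∀ i, y i ∉ closedNbhd H (x i)) → (∀ i j, i < j → y j ∈ closedNbhd H (x i)) →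
        n ≤ q := by
      intro n x y hx hy hne hcross
      refine hq n x y ⟨fun i hadj => hne i (Set.mem_insert_of_mem _ hadj), fun i j hij => ?_⟩
      rcases hcross i j hij with h | h
      · exact absurd (h ▸ hx i) (hy j)
      · exact h
    rcases h (q + 1) with ⟨x, y, hx, hy, hne, hcross⟩ | done
    · exact absurd (key _ x y hx hy hne hcross) (by omega)
    · exact done
  intro n
  induction n with
  | zero => exact Or.inl ⟨Fin.elim0, Fin.elim0, fun i => i.elim0, fun i => i.elim0,
      fun i => i.elim0, fun i => i.elim0⟩
  | succ n ih =>
    rcases ih with ⟨x, y, hx, hy, hne, hcross⟩ | done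
    · -- ladder of length n
      have hnq : n ≤ q := by
        refine hq n x y ⟨fun i hadj => hne i (Set.mem_insert_of_mem _ hadj),
          fun i j hij => ?_⟩
        rcases hcross i j hij with h | h
        · exact absurd (h ▸ hx i) (hy j)
        · exact h
      by_cases hS : ∀ v, (∀ i, v ∈ closedNbhd H (x i)) → v ∈ K
      · refine Or.inr ⟨Set.range x, ?_, Set.finite_range x, ?_, ?_⟩
        · rintro _ ⟨i, rfl⟩; exact hx i
        · calc (Set.range x).ncard ≤ n := by
                have h1 : Set.range x = ↑(Finset.image x Finset.univ) := by
                  simp [Finset.coe_image]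
                rw [h1, Set.ncard_coe_finset]
                exact le_trans (Finset.card_image_le) (by simp)
             _ ≤ q := hnq
        · apply Set.Subset.antisymm
          · intro v hv
            simp only [Set.mem_iInter]
            rintro a ⟨i, rfl⟩
            exact hKsub (x i) (hx i) hv
          · intro v hv
            simp only [Set.mem_iInter] at hv
            exact hS v fun i => hv (x i) ⟨i, rfl⟩
      · push_neg at hS
        obtain ⟨v, hvall, hvK⟩ := hS
        have : ∃ a ∈ K, v ∉ closedNbhd H a := by
          by_contra hcon
          push_neg at hcon
          have hclq : H.IsClique (insert v K) := by
            apply hK.insert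
            intro b hb hbv
            rcases hcon b hb with h | h
            · exact absurd h.symm (Ne.symm hbv)
            · exact (H.adj_symm h)
          exact hvK ((hmax _ hclq (Set.subset_insert _ _)) ▸ Set.mem_insert v K)
        obtain ⟨a, haK, hav⟩ := this
        refine Or.inl ⟨Fin.snoc x a, Fin.snoc y v, ?_, ?_, ?_, ?_⟩
        · intro i
          induction i using Fin.lastCases with
          | last => simpa using haK
          | cast j => simpa using hx j
        · intro i
          induction i using Fin.lastCases with
          | last => simpa using hvK
          | cast j => simpa using hy j
        · intro i
          induction i using Fin.lastCases with
          | last => simpa using hav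
          | cast j => simpa using hne j
        · intro i j hij
          rcases Fin.eq_castSucc_or_eq_last j with ⟨j', rfl⟩ | rfl
          · have hil : i < Fin.last n := lt_trans hij (Fin.castSucc_lt_last j')
            obtain ⟨i', rfl⟩ := Fin.exists_castSucc_eq.mpr (Fin.ne_last_of_lt hij)
            have : i' < j' := by simpa using hij
            simpa using hcross i' j' this
          · obtain ⟨i', rfl⟩ := Fin.exists_castSucc_eq.mpr (Fin.ne_last_of_lt hij)
            simpa using hvall i'
    · exact Or.inr done
end

section
/- If a graph H on n vertices has semi-ladder index at most q, then the number of inclusion-wise maximal cliques in H is at most the number of subsets of V(H) of size at most q, and in particular at most (n+1)^q. -/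
open SimpleGraph Set

variable {V : Type*}

-- encoding lemma
noncomputable def enc [Fintype V] (q : ℕ) (A : Set V) : Fin q → Option V := by
  classical
  exact fun i => if h : (i : ℕ) < A.ncard then
    some ((Fintype.equivFinOfCardEq (α := A)
      (by rw [← Nat.card_eq_fintype_card, Nat.card_coe_set_eq])).symm ⟨i, h⟩ : V)
  else none

lemma enc_spec [Fintype V] {q : ℕ} {A : Set V} (hA : A.ncard ≤ q) (v : V) :
    v ∈ A ↔ ∃ i : Fin q, enc q A i = some v := by
  classical
  set e := (Fintype.equivFinOfCardEq (α := A)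
      (by rw [← Nat.card_eq_fintype_card, Nat.card_coe_set_eq] : Fintype.card A = A.ncard))
  constructor
  · intro hv
    set j := e ⟨v, hv⟩ with hj
    refine ⟨⟨j, lt_of_lt_of_le j.2 hA⟩, ?_⟩
    have h2 : ((j : ℕ)) < A.ncard := j.2
    simp only [enc, h2, dif_pos]
    congr 1
    have : (⟨(j : ℕ), h2⟩ : Fin A.ncard) = j := rfl
    rw [this, hj, Equiv.symm_apply_apply]
  · rintro ⟨i, hi⟩
    simp only [enc] at hi
    split_ifs at hi with h
    · have h2 := Option.some_injective _ hi
      rw [← h2]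
      exact Subtype.coe_prop _


lemma small_sets_bound [Fintype V] (q : ℕ) :
    {A : Set V | A.ncard ≤ q}.ncard ≤ (Fintype.card V + 1) ^ q := by
  classical
  have hcard : (Fintype.card V + 1) ^ q = (Set.univ : Set (Fin q → Option V)).ncard := by
    rw [Set.ncard_univ, Nat.card_eq_fintype_card, Fintype.card_fun]
    simp
  rw [hcard]
  refine Set.ncard_le_ncard_of_injOn (fun A => enc q A) (fun A _ => trivial) ?_ (Set.toFinite _)
  intro A hA B hB hAB
  have hAB' : enc q A = enc q B := hAB
  ext v
  rw [enc_spec hA, enc_spec hB, hAB']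

lemma inter_closed [Fintype V] (H : SimpleGraph V) {K : Set V}
    (hK : H.IsClique K) (hmax : ∀ K', H.IsClique K' → K ⊆ K' → K = K') :
    (⋂ a ∈ K, closedNbhd H a) = K := by
  apply subset_antisymm
  · intro y hy
    simp only [Set.mem_iInter] at hy
    have hcl : H.IsClique (insert y K) := by
      apply hK.insert
      intro b hb hne
      have := hy b hb
      rcases this with h | h
      · exact absurd h hne
      · exact (SimpleGraph.Adj.symm h)
    have := hmax _ hcl (Set.subset_insert _ _)
    rw [this]; exact Set.mem_insert _ _
  · intro a ha
    simp only [Set.mem_iInter]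
    intro b hb
    by_cases hab : a = b
    · exact hab ▸ Set.mem_insert _ _
    · exact Set.mem_insert_of_mem _ (hK hb ha (Ne.symm hab))

lemma exists_core [Fintype V] (H : SimpleGraph V) (q : ℕ) (hq : semiLadderIndexLE H q)
    {K : Set V} (hK : H.IsClique K) (hmax : ∀ K', H.IsClique K' → K ⊆ K' → K = K') :
    ∃ A : Set V, A ⊆ K ∧ A.ncard ≤ q ∧ (⋂ a ∈ A, closedNbhd H a) = K := by
  classical
  set S : Set (Set V) := {A | A ⊆ K ∧ (⋂ a ∈ A, closedNbhd H a) = K} with hS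
  have hKS : K ∈ S := ⟨subset_rfl, inter_closed H hK hmax⟩
  obtain ⟨A, hAS, hAmin'⟩ :=
    (Set.toFinite S).exists_minimalFor (fun A : Set V => A.ncard) S ⟨K, hKS⟩
  have hAmin : ∀ B ∈ S, B.ncard ≤ A.ncard → A.ncard ≤ B.ncard := fun B hB h => hAmin' hB h
  refine ⟨A, hAS.1, ?_, hAS.2⟩
  -- for each a in A, a witness y outside K adjacent to all other elements of A
  have hwit : ∀ a ∈ A, ∃ y, y ∉ K ∧ y ∉ closedNbhd H a ∧
      ∀ b ∈ A, b ≠ a → y ∈ closedNbhd H b := by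
    intro a ha
    have hAa : A \ {a} ∉ S := by
      intro hmem
      have hlt : (A \ {a}).ncard < A.ncard :=
        Set.ncard_lt_ncard (by
          constructor
          · exact Set.diff_subset
          · intro hsub
            exact (hsub ha).2 rfl) (Set.toFinite _)
      have := hAmin _ hmem (le_of_lt hlt)
      omega
    have hsub : A \ {a} ⊆ K := Set.diff_subset.trans hAS.1
    have hne : (⋂ b ∈ A \ {a}, closedNbhd H b) ≠ K := fun h => hAa ⟨hsub, h⟩
    have hsup : K ⊆ ⋂ b ∈ A \ {a}, closedNbhd H b := by
      rw [← hAS.2]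
      exact Set.biInter_mono Set.diff_subset (fun _ _ => subset_rfl)
    obtain ⟨y, hy1, hy2⟩ : ∃ y, y ∈ (⋂ b ∈ A \ {a}, closedNbhd H b) ∧ y ∉ K := by
      by_contra h
      push_neg at h
      exact hne (subset_antisymm h hsup)
    refine ⟨y, hy2, ?_, ?_⟩
    · intro hy3
      apply hy2
      rw [← hAS.2]
      simp only [Set.mem_iInter] at hy1 ⊢
      intro b hb
      by_cases hba : b = a
      · exact hba ▸ hy3
      · exact hy1 b ⟨hb, hba⟩
    · intro b hb hba
      simp only [Set.mem_iInter] at hy1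
      exact hy1 b ⟨hb, hba⟩
  -- build semi-ladder
  choose! y hy1 hy2 hy3 using hwit
  have hcardA : Fintype.card A = A.ncard := by
    rw [← Nat.card_eq_fintype_card, Nat.card_coe_set_eq]
  set e := (Fintype.equivFinOfCardEq hcardA).symm with he
  set x : Fin A.ncard → V := fun i => (e i : V) with hx
  have hxA : ∀ i, x i ∈ A := fun i => (e i).2
  have hxinj : Function.Injective x := fun i j hij => by
    have : e i = e j := Subtype.ext hij
    exact (Fintype.equivFinOfCardEq hcardA).symm.injective this
  refine hq A.ncard x (fun i => y (x i)) ⟨?_, ?_⟩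
  · intro i hadj
    exact hy2 (x i) (hxA i) (Set.mem_insert_of_mem _ hadj)
  · intro i j hij
    have hmem := hy3 (x j) (hxA j) (x i) (hxA i) (fun h => (hij.ne (hxinj h)).elim)
    rcases hmem with h | h
    · exact absurd (hAS.1 (hxA i)) (h ▸ hy1 (x j) (hxA j))
    · exact h

/-- If H has semi-ladder index ≤ q, the number of maximal cliques of H is at most the
number of vertex subsets of size ≤ q, in particular at most (n+1)^q. -/
theorem stmt14 [Fintype V] (H : SimpleGraph V) (q : ℕ) (hq : semiLadderIndexLE H q) :
    {K : Set V | H.IsClique K ∧ ∀ K', H.IsClique K' → K ⊆ K' → K = K'}.ncard ≤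
        {A : Set V | A.ncard ≤ q}.ncard ∧
      {K : Set V | H.IsClique K ∧ ∀ K', H.IsClique K' → K ⊆ K' → K = K'}.ncard ≤
        (Fintype.card V + 1) ^ q := by
  classical
  have key : {K : Set V | H.IsClique K ∧ ∀ K', H.IsClique K' → K ⊆ K' → K = K'}.ncard ≤
      {A : Set V | A.ncard ≤ q}.ncard := by
    have hex : ∀ K ∈ {K : Set V | H.IsClique K ∧ ∀ K', H.IsClique K' → K ⊆ K' → K = K'},
        ∃ A : Set V, A ⊆ K ∧ A.ncard ≤ q ∧ (⋂ a ∈ A, closedNbhd H a) = K :=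
      fun K hK => exists_core H q hq hK.1 hK.2
    choose! F _hF1 hF2 hF3 using hex
    refine Set.ncard_le_ncard_of_injOn F (fun K hK => hF2 K hK) ?_ (Set.toFinite _)
    intro K1 h1 K2 h2 hF
    rw [← hF3 K1 h1, ← hF3 K2 h2, hF]
  exact ⟨key, key.trans (small_sets_bound q)⟩
end
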